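/- The function r(y₁,y₂,y₃) = 1 + (1/2) sin(2πy₂) sin(2πy₃) on 𝕋³ satisfies -Σᵢ ∂ᵢ²(Aᵢᵢ r) + Σᵢ ∂ᵢ(bᵢ r) = 0 with ∫_{𝕋³} r = 1, where Aᵢᵢ(y) = (2 + sin(2πyᵢ))/(2 + sin(2πy₂)sin(2πy₃)) and bᵢ(y) = 2π cos(2πyᵢ)/(2 + sin(2πy₂)sin(2πy₃)) for i = 1,2,3, and moreover the centering condition ∫_{𝕋³} b r = 0 holds. -/

import Mathlib

open MeasureTheory

/-- The unit cube, a fundamental domain of the torus `ℝᵈ/ℤᵈ`. -/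
def cube (d : ℕ) : Set (Fin d → ℝ) := Set.Icc 0 1

/-- Partial derivative `∂ᵢ f` of a function on `ℝᵈ`. -/
noncomputable def pd {d : ℕ} (i : Fin d) (f : (Fin d → ℝ) → ℝ) :
    (Fin d → ℝ) → ℝ := fun x => fderiv ℝ f x (Pi.single i 1)

private lemma HasDerivAt.congr_d {f : ℝ → ℝ} {a b t : ℝ} (h : HasDerivAt f a t)
    (hab : a = b) : HasDerivAt f b t := hab ▸ h

private lemma hd_sin (t : ℝ) :
    HasDerivAt (fun t => Real.sin (2 * Real.pi * t))
      (2 * Real.pi * Real.cos (2 * Real.pi * t)) t := by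
  have h1 : HasDerivAt (fun t : ℝ => 2 * Real.pi * t) (2 * Real.pi) t := by
    simpa using (hasDerivAt_id t).const_mul (2 * Real.pi)
  exact ((Real.hasDerivAt_sin (2 * Real.pi * t)).comp t h1).congr_d (by ring)

private lemma hd_cos (t : ℝ) :
    HasDerivAt (fun t => Real.cos (2 * Real.pi * t))
      (-(2 * Real.pi * Real.sin (2 * Real.pi * t))) t := by
  have h1 : HasDerivAt (fun t : ℝ => 2 * Real.pi * t) (2 * Real.pi) t := by
    simpa using (hasDerivAt_id t).const_mul (2 * Real.pi)
  exact ((Real.hasDerivAt_cos (2 * Real.pi * t)).comp t h1).congr_d (by ring)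

private lemma pd_eval {g g' : ℝ → ℝ} (hg : ∀ t, HasDerivAt g (g' t) t) (i : Fin 3) :
    pd i (fun x : Fin 3 → ℝ => g (x i)) = fun x => g' (x i) := by
  funext x
  have hproj := (ContinuousLinearMap.proj (R := ℝ) (φ := fun _ : Fin 3 => ℝ) i).hasFDerivAt (x := x)
  have h : HasFDerivAt (fun x : Fin 3 → ℝ => g (x i))
      (((1 : ℝ →L[ℝ] ℝ).smulRight (g' (x i))).comp
        (ContinuousLinearMap.proj (R := ℝ) (φ := fun _ : Fin 3 => ℝ) i)) x :=
    (hg (x i)).hasFDerivAt.comp x hproj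
  rw [pd, h.fderiv]
  simp

private lemma Dpos (y : Fin 3 → ℝ) :
    0 < 2 + Real.sin (2 * Real.pi * y 1) * Real.sin (2 * Real.pi * y 2) := by
  nlinarith [Real.sin_le_one (2 * Real.pi * y 1), Real.neg_one_le_sin (2 * Real.pi * y 1),
    Real.sin_le_one (2 * Real.pi * y 2), Real.neg_one_le_sin (2 * Real.pi * y 2)]

private lemma box_int (f : Fin 3 → ℝ → ℝ) :
    ∫ y in cube 3, ∏ i, f i (y i) = ∏ i, ∫ t in Set.Icc (0:ℝ) 1, f i t := by
  have hs : MeasurableSet (cube 3) := measurableSet_Icc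
  have hcube : cube 3 = Set.pi Set.univ (fun _ : Fin 3 => Set.Icc (0:ℝ) 1) := by
    rw [cube, ← Set.pi_univ_Icc]; rfl
  rw [← integral_indicator hs]
  have key : ∀ y : Fin 3 → ℝ, (cube 3).indicator (fun y => ∏ i, f i (y i)) y
      = ∏ i, (Set.Icc (0:ℝ) 1).indicator (f i) (y i) := by
    intro y
    rw [hcube]
    by_cases h : y ∈ Set.pi Set.univ (fun _ : Fin 3 => Set.Icc (0:ℝ) 1)
    · rw [Set.indicator_of_mem h]
      exact Finset.prod_congr rfl fun i _ =>
        (Set.indicator_of_mem (h i (Set.mem_univ i)) _).symm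
    · rw [Set.indicator_of_notMem h]
      obtain ⟨i, hi⟩ : ∃ i, y i ∉ Set.Icc (0:ℝ) 1 := by
        by_contra hc
        push_neg at hc
        exact h fun i _ => hc i
      exact (Finset.prod_eq_zero (Finset.mem_univ i)
        (Set.indicator_of_notMem hi _)).symm
  simp only [key]
  rw [volume_pi, MeasureTheory.integral_fintype_prod_eq_prod (ι := Fin 3)
    (fun i => (Set.Icc (0:ℝ) 1).indicator (f i))]
  exact Finset.prod_congr rfl fun i _ => integral_indicator measurableSet_Icc

private lemma Isin : ∫ t in Set.Icc (0:ℝ) 1, Real.sin (2 * Real.pi * t) = 0 := by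
  rw [integral_Icc_eq_integral_Ioc, ← intervalIntegral.integral_of_le zero_le_one,
    intervalIntegral.integral_comp_mul_left Real.sin
      (by positivity : (2 * Real.pi) ≠ 0)]
  simp [integral_sin, Real.cos_two_pi]

private lemma Icos : ∫ t in Set.Icc (0:ℝ) 1, Real.cos (2 * Real.pi * t) = 0 := by
  rw [integral_Icc_eq_integral_Ioc, ← intervalIntegral.integral_of_le zero_le_one,
    intervalIntegral.integral_comp_mul_left Real.cos
      (by positivity : (2 * Real.pi) ≠ 0)]
  simp [integral_cos, Real.sin_two_pi]

private lemma hvol : (volume (cube 3)).toReal = 1 := by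
  rw [cube]
  rw [show (volume (Set.Icc (0:Fin 3 → ℝ) 1)).toReal
      = ∏ i : Fin 3, ((1:Fin 3 → ℝ) i - (0:Fin 3 → ℝ) i) from
    Real.volume_Icc_pi_toReal (fun i => zero_le_one)]
  simp

/-- The function `r(y₁,y₂,y₃) = 1 + ½ sin(2πy₂) sin(2πy₃)` on `𝕋³` solves
`-Σᵢ ∂ᵢ²(Aᵢᵢ r) + Σᵢ ∂ᵢ(bᵢ r) = 0` for the stated diagonal diffusion matrix `A`
and drift `b`, with `∫ r = 1` and the centering condition `∫ b r = 0`. -/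
theorem stmt7 :
    let r : (Fin 3 → ℝ) → ℝ := fun y =>
      1 + (1 / 2) * Real.sin (2 * Real.pi * y 1) * Real.sin (2 * Real.pi * y 2)
    let D : (Fin 3 → ℝ) → ℝ := fun y =>
      2 + Real.sin (2 * Real.pi * y 1) * Real.sin (2 * Real.pi * y 2)
    let A : Fin 3 → (Fin 3 → ℝ) → ℝ := fun i y =>
      (2 + Real.sin (2 * Real.pi * y i)) / D y
    let b : Fin 3 → (Fin 3 → ℝ) → ℝ := fun i y =>
      (2 * Real.pi * Real.cos (2 * Real.pi * y i)) / D y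
    (∀ y, -(∑ i, pd i (pd i (fun x => A i x * r x)) y)
        + ∑ i, pd i (fun x => b i x * r x) y = 0) ∧
    (∫ y in cube 3, r y) = 1 ∧
    (∀ i, (∫ y in cube 3, b i y * r y) = 0) := by
  intro r D A b
  have hAr : ∀ i : Fin 3, (fun x => A i x * r x)
      = fun x : Fin 3 → ℝ => 1 + Real.sin (2 * Real.pi * x i) / 2 := by
    intro i
    funext x
    have hD := Dpos x
    simp only [A, r, D]
    field_simp
  have hbr : ∀ i : Fin 3, (fun x => b i x * r x)
      = fun x : Fin 3 → ℝ => Real.pi * Real.cos (2 * Real.pi * x i) := by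
    intro i
    funext x
    have hD := Dpos x
    simp only [b, r, D]
    field_simp
  have hg1 : ∀ t : ℝ, HasDerivAt (fun t => 1 + Real.sin (2 * Real.pi * t) / 2)
      (Real.pi * Real.cos (2 * Real.pi * t)) t := fun t =>
    (((hd_sin t).div_const 2).const_add 1).congr_d (by ring)
  have hg2 : ∀ t : ℝ, HasDerivAt (fun t => Real.pi * Real.cos (2 * Real.pi * t))
      (-(2 * Real.pi ^ 2 * Real.sin (2 * Real.pi * t))) t := fun t =>
    ((hd_cos t).const_mul Real.pi).congr_d (by ring)
  refine ⟨?_, ?_, ?_⟩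
  · intro y
    have h2 : ∀ i : Fin 3, pd i (pd i (fun x => A i x * r x)) y
        = -(2 * Real.pi ^ 2 * Real.sin (2 * Real.pi * y i)) := by
      intro i
      rw [hAr i, pd_eval hg1 i, pd_eval hg2 i]
    have h1 : ∀ i : Fin 3, pd i (fun x => b i x * r x) y
        = -(2 * Real.pi ^ 2 * Real.sin (2 * Real.pi * y i)) := by
      intro i
      rw [hbr i, pd_eval hg2 i]
    simp only [h1, h2]
    ring
  · -- ∫ r = 1
    set G : Fin 3 → ℝ → ℝ :=
      fun j => if j = 0 then (fun _ => (1:ℝ)) else fun t => Real.sin (2 * Real.pi * t)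
      with hG
    have h0 : ∫ y in cube 3,
        Real.sin (2 * Real.pi * y 1) * Real.sin (2 * Real.pi * y 2) = 0 := by
      have hprod : (fun y : Fin 3 → ℝ =>
          Real.sin (2 * Real.pi * y 1) * Real.sin (2 * Real.pi * y 2))
          = fun y => ∏ j, G j (y j) := by
        funext y
        rw [Fin.prod_univ_three]
        simp only [hG, if_pos rfl, if_neg (show (1:Fin 3) ≠ 0 by decide),
          if_neg (show (2:Fin 3) ≠ 0 by decide)]
        ring
      rw [hprod, box_int G, Fin.prod_univ_three]
      simp only [hG, if_pos rfl, if_neg (show (1:Fin 3) ≠ 0 by decide),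
        if_neg (show (2:Fin 3) ≠ 0 by decide), Isin]
      ring
    have hsplit : (fun y : Fin 3 → ℝ => r y)
        = fun y => (1:ℝ) + (1/2) * (Real.sin (2 * Real.pi * y 1)
            * Real.sin (2 * Real.pi * y 2)) := by
      funext y; simp only [r]; ring
    have hint2 : IntegrableOn (fun y : Fin 3 → ℝ =>
        (1/2 : ℝ) * (Real.sin (2 * Real.pi * y 1) * Real.sin (2 * Real.pi * y 2)))
        (cube 3) := by
      apply ContinuousOn.integrableOn_compact (isCompact_Icc (α := Fin 3 → ℝ))
      exact Continuous.continuousOn (by fun_prop)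
    have hint1 : IntegrableOn (fun _ : Fin 3 → ℝ => (1:ℝ)) (cube 3) := by
      apply ContinuousOn.integrableOn_compact (isCompact_Icc (α := Fin 3 → ℝ))
      exact continuousOn_const
    show (∫ y in cube 3, r y) = 1
    rw [hsplit, integral_add hint1 hint2, MeasureTheory.integral_const_mul, h0,
      setIntegral_const, measureReal_def, hvol]
    norm_num
  · -- centering
    intro i
    have : (fun y : Fin 3 → ℝ => b i y * r y) = fun y => ∏ j,
        (fun j : Fin 3 => if j = i then (fun t => Real.pi * Real.cos (2 * Real.pi * t))
          else fun _ => (1:ℝ)) j (y j) := by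
      rw [hbr i]
      funext y
      simp only [ite_apply]
      rw [Finset.prod_ite_eq' Finset.univ i (fun j => Real.pi * Real.cos (2 * Real.pi * y j))]
      simp
    show (∫ y in cube 3, b i y * r y) = 0
    rw [show (∫ y in cube 3, b i y * r y) = ∫ y in cube 3, ∏ j,
        (fun j : Fin 3 => if j = i then (fun t => Real.pi * Real.cos (2 * Real.pi * t))
          else fun _ => (1:ℝ)) j (y j) from by rw [← this], box_int]
    apply Finset.prod_eq_zero (Finset.mem_univ i)
    simp only [eq_self_iff_true, if_true]
    rw [MeasureTheory.integral_const_mul, Icos, mul_zero]
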